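/- Let n be a positive integer and ω > 0 a real number. Then for all integers r, d, s satisfying nd² − rs = −1, one has ((s − nω²r)² + 4n²ω²d²) / (4nω²) ≥ (1/(4n))·(1/ω + nω)² − 1. -/
import Mathlib


/-- Key estimate in Proposition 2.13: if `nd² − rs = −1` then
`((s − nω²r)² + 4n²ω²d²)/(4nω²) ≥ (1/(4n))(1/ω + nω)² − 1`. -/
theorem stmt_5 (n : ℕ) (hn : 0 < n) (ω : ℝ) (hω : 0 < ω)
    (r d s : ℤ) (h : (n : ℤ) * d ^ 2 - r * s = -1) :
    (((s : ℝ) - n * ω ^ 2 * r) ^ 2 + 4 * n ^ 2 * ω ^ 2 * d ^ 2) / (4 * n * ω ^ 2) ≥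
      (1 / (4 * n)) * (1 / ω + n * ω) ^ 2 - 1 := by
  have hn' : (0 : ℝ) < n := by exact_mod_cast hn
  have hrs : 1 ≤ r * s := by nlinarith [sq_nonneg d, (by exact_mod_cast hn.le : (0:ℤ) ≤ n)]
  have hr2 : (1 : ℤ) ≤ r ^ 2 := by
    rcases lt_trichotomy r 0 with h1 | h1 | h1
    · nlinarith
    · subst h1; simp at hrs
    · nlinarith
  have hs2 : (1 : ℤ) ≤ s ^ 2 := by
    rcases lt_trichotomy s 0 with h1 | h1 | h1
    · nlinarith
    · subst h1; simp at hrs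
    · nlinarith
  have hrsR : (1 : ℝ) ≤ (r : ℝ) * s := by exact_mod_cast hrs
  have hr2R : (1 : ℝ) ≤ (r : ℝ) ^ 2 := by exact_mod_cast hr2
  have hs2R : (1 : ℝ) ≤ (s : ℝ) ^ 2 := by exact_mod_cast hs2
  have hA : (0 : ℝ) < n * ω ^ 2 := by positivity
  have key : (1 + (n : ℝ) * ω ^ 2) ^ 2 ≤ ((s : ℝ) + n * ω ^ 2 * r) ^ 2 := by
    nlinarith [sq_nonneg ((n : ℝ) * ω ^ 2), mul_pos hA hA]
  have hR : (n : ℝ) * d ^ 2 - r * s = -1 := by exact_mod_cast h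
  have h4 : (0 : ℝ) < 4 * n * ω ^ 2 := by positivity
  rw [ge_iff_le, ← sub_nonneg]
  have expand :
      (((s : ℝ) - n * ω ^ 2 * r) ^ 2 + 4 * n ^ 2 * ω ^ 2 * d ^ 2) / (4 * n * ω ^ 2) -
        ((1 / (4 * n)) * (1 / ω + n * ω) ^ 2 - 1) =
      (((s : ℝ) + n * ω ^ 2 * r) ^ 2 - (1 + n * ω ^ 2) ^ 2) / (4 * n * ω ^ 2) := by
    field_simp
    ring_nf
    linear_combination (4 * (n : ℝ) * ω ^ 2) * hR
  rw [expand]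
  exact div_nonneg (by linarith) h4.le
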